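/- arXiv:2411.03528 — 4 statements merged into one kernel-verified Lean document; each statement's English description precedes it below -/
import Mathlib

section
/- Suppose 0 < ε ≤ 1/9 and 0 < θ ≤ 1/9, and set θ* := θ/(1−ε). Then for every positive integer n, the n-th power (under matrix multiplication) of the 3×3 matrix ℙ^{(ε,θ)} satisfies (ℙ^{(ε,θ)})^n = (1−θ*)^n·I_3 + [1 − (1−θ*)^n]·A^{(ε)} + [(1−θ)^n − (1−θ*)^n]·C. -/
open MeasureTheory ProbabilityTheory Filter Topology

noncomputable section

/-- The index set `{−1, 0, 1} ⊆ ℤ` for the 3×3 matrices. -/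
def S3 : Finset ℤ := {-1, 0, 1}

/-- The one-step transition probability matrix `ℙ^{(ε,θ)}`, indexed by `{−1,0,1}`
(with `θ* := θ/(1−ε)`): `p_{0,0} = 1 − θ*ε`; `p_{0,−1} = p_{0,1} = θ*ε/2`;
`p_{−1,−1} = p_{1,1} = 1 − θ`; `p_{−1,0} = p_{1,0} = θ`; `p_{−1,1} = p_{1,−1} = 0`. -/
def Pmat (ε θ : ℝ) : Matrix S3 S3 ℝ :=
  Matrix.of fun i j =>
    if (i : ℤ) = 0 ∧ (j : ℤ) = 0 then 1 - (θ / (1 - ε)) * ε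
    else if (i : ℤ) = 0 then (θ / (1 - ε)) * ε / 2
    else if (j : ℤ) = 0 then θ
    else if (i : ℤ) = (j : ℤ) then 1 - θ
    else 0

/-- The invariant probability vector `π^{(ε)}`: `π_0 = 1 − ε`, `π_{−1} = π_1 = ε/2`. -/
def piVec (ε : ℝ) : S3 → ℝ := fun j => if (j : ℤ) = 0 then 1 - ε else ε / 2

/-- The matrix `A^{(ε)}`, each of whose rows equals `π^{(ε)}`. -/
def Amat (ε : ℝ) : Matrix S3 S3 ℝ :=
  Matrix.of fun _ j => piVec ε j

/-- The matrix `C`: `c_{−1,−1} = c_{1,1} = 1/2`, `c_{−1,1} = c_{1,−1} = −1/2`, and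
`c_{i,j} = 0` whenever `i = 0` or `j = 0`. -/
def Cmat : Matrix S3 S3 ℝ :=
  Matrix.of fun i j =>
    if (i : ℤ) = 0 ∨ (j : ℤ) = 0 then 0
    else if (i : ℤ) = (j : ℤ) then 1 / 2
    else -(1 / 2)

lemma mem_m1 : (-1:ℤ) ∈ S3 := by decide
lemma mem_0 : (0:ℤ) ∈ S3 := by decide
lemma mem_1 : (1:ℤ) ∈ S3 := by decide

lemma S3sum (f : S3 → ℝ) :
    ∑ x : S3, f x = f ⟨-1, mem_m1⟩ + f ⟨0, mem_0⟩ + f ⟨1, mem_1⟩ := by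
  have h1 : ∑ x : S3, f x
      = ∑ x ∈ S3, (fun y => if h : y ∈ S3 then f ⟨y, h⟩ else 0) x := by
    rw [Finset.univ_eq_attach,
      ← Finset.sum_attach S3 (fun y => if h : y ∈ S3 then f ⟨y, h⟩ else 0)]
    exact Finset.sum_congr rfl fun x _ => by simp [x.2]
  rw [h1]
  show ∑ x ∈ ({-1, 0, 1} : Finset ℤ), _ = _
  rw [Finset.sum_insert (by decide), Finset.sum_insert (by decide), Finset.sum_singleton]
  simp [mem_m1, mem_0, mem_1]
  ring

lemma Pdecomp (ε θ : ℝ) (h : (1:ℝ) - ε ≠ 0) :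
    Pmat ε θ = (1 - θ / (1 - ε)) • (1 : Matrix S3 S3 ℝ)
      + (θ / (1 - ε)) • Amat ε + (θ / (1 - ε) - θ) • Cmat := by
  ext i j
  obtain ⟨i, hi⟩ := i
  obtain ⟨j, hj⟩ := j
  fin_cases hi <;> fin_cases hj <;>
    simp [Pmat, Amat, Cmat, piVec, Matrix.one_apply, Matrix.add_apply, Matrix.smul_apply,
      Subtype.ext_iff, -SetLike.coe_eq_coe] <;>
    (try field_simp) <;> ring

lemma AP (ε θ : ℝ) (h : (1:ℝ) - ε ≠ 0) : Amat ε * Pmat ε θ = Amat ε := by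
  ext i j
  rw [Matrix.mul_apply, S3sum]
  obtain ⟨j, hj⟩ := j
  fin_cases hj <;> simp [Pmat, Amat, piVec, Subtype.ext_iff, -SetLike.coe_eq_coe] <;> (try field_simp) <;> ring

lemma CP (ε θ : ℝ) : Cmat * Pmat ε θ = (1 - θ) • Cmat := by
  ext i j
  rw [Matrix.mul_apply, S3sum]
  obtain ⟨i, hi⟩ := i
  obtain ⟨j, hj⟩ := j
  fin_cases hi <;> fin_cases hj <;> simp [Pmat, Cmat, Subtype.ext_iff, -SetLike.coe_eq_coe] <;> ring

theorem stmt4' (ε θ : ℝ) (hε : 0 < ε ∧ ε ≤ 1 / 9) (hθ : 0 < θ ∧ θ ≤ 1 / 9)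
    (n : ℕ) (hn : 0 < n) :
    (Pmat ε θ) ^ n =
      (1 - θ / (1 - ε)) ^ n • (1 : Matrix S3 S3 ℝ)
        + (1 - (1 - θ / (1 - ε)) ^ n) • Amat ε
        + ((1 - θ) ^ n - (1 - θ / (1 - ε)) ^ n) • Cmat := by
  have h : (1:ℝ) - ε ≠ 0 := by
    have := hε.2; nlinarith [hε.1]
  set t := θ / (1 - ε) with ht
  obtain ⟨m, rfl⟩ : ∃ m, n = m + 1 := ⟨n - 1, (Nat.succ_pred_eq_of_pos hn).symm⟩
  clear hn
  induction m with
  | zero =>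
    simp [pow_one, Pdecomp ε θ h, ht]
  | succ m ih =>
    rw [pow_succ, ih]
    rw [Matrix.add_mul, Matrix.add_mul, Matrix.smul_mul, Matrix.smul_mul, Matrix.smul_mul,
      Matrix.one_mul, AP ε θ h, CP ε θ, Pdecomp ε θ h]
    ext i j
    simp [Matrix.add_apply, Matrix.smul_apply, Matrix.one_apply, ht]
    ring

/-- Formula (5.16) of the paper: for `0 < ε ≤ 1/9`, `0 < θ ≤ 1/9`, `θ* := θ/(1−ε)`, and
every `n ≥ 1`, `(ℙ^{(ε,θ)})^n = (1−θ*)^n·I + (1 − (1−θ*)^n)·A^{(ε)}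
+ ((1−θ)^n − (1−θ*)^n)·C`. -/
theorem stmt4 (ε θ : ℝ) (hε : 0 < ε ∧ ε ≤ 1 / 9) (hθ : 0 < θ ∧ θ ≤ 1 / 9)
    (n : ℕ) (hn : 0 < n) :
    (Pmat ε θ) ^ n =
      (1 - θ / (1 - ε)) ^ n • (1 : Matrix S3 S3 ℝ)
        + (1 - (1 - θ / (1 - ε)) ^ n) • Amat ε
        + ((1 - θ) ^ n - (1 - θ / (1 - ε)) ^ n) • Cmat := by
  exact stmt4' ε θ hε hθ n hn
end
end

section
/- Suppose φ : [1,∞) → (−∞,0] is strictly decreasing and convex, with lim_{x→∞} φ(x) = −∞ and lim_{x→∞} φ(x)/x = 0. Let Γ denote the set of points x ∈ (1,∞) at which φ is not differentiable. Then for every negative number D and every positive number s, there exists T > 1 with the following property: for every y ∈ [T,∞) with y ∉ Γ, one has −s ≤ φ′(y) < 0 and φ(y) − y·φ′(y) ≤ D. (Equivalently: the affine function L^{(y)}(x) := φ(y) + φ′(y)(x − y), whose graph is the tangent line to the graph of φ at (y, φ(y)), has slope φ′(y) ∈ [−s, 0) and satisfies L^{(y)}(0) ≤ D.) -/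
open MeasureTheory ProbabilityTheory Filter Topology

noncomputable section

/-- Lemma 6.5(II) of the paper: if `φ : [1,∞) → (−∞,0]` is strictly decreasing and
convex with `φ(x) → −∞` and `φ(x)/x → 0` as `x → ∞`, then for every `D < 0` and `s > 0`
there is `T > 1` such that at every point `y ≥ T` of differentiability,
`−s ≤ φ′(y) < 0` and the tangent line at `y` satisfies `L^{(y)}(0) = φ(y) − y·φ′(y) ≤ D`. -/
theorem stmt15 (φ : ℝ → ℝ)
    (hrange : ∀ x ∈ Set.Ici (1 : ℝ), φ x ≤ 0)
    (hanti : StrictAntiOn φ (Set.Ici (1 : ℝ)))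
    (hconv : ConvexOn ℝ (Set.Ici (1 : ℝ)) φ)
    (hlim1 : Tendsto φ atTop atBot)
    (hlim2 : Tendsto (fun x => φ x / x) atTop (nhds 0))
    (D s : ℝ) (hD : D < 0) (hs : 0 < s) :
    ∃ T : ℝ, 1 < T ∧ ∀ y : ℝ, T ≤ y → DifferentiableAt ℝ φ y →
      -s ≤ deriv φ y ∧ deriv φ y < 0 ∧ φ y - y * deriv φ y ≤ D := by
  -- choose x₀ ≥ 1 with φ x₀ ≤ 2 D
  obtain ⟨x₀, hx₀1, hx₀D⟩ : ∃ x₀ : ℝ, 1 ≤ x₀ ∧ φ x₀ ≤ 2 * D := by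
    have h := (hlim1.eventually (eventually_le_atBot (2 * D))).and (eventually_ge_atTop 1)
    obtain ⟨x₀, h1, h2⟩ := h.exists
    exact ⟨x₀, h2, h1⟩
  have hx₀0 : (0 : ℝ) < x₀ := lt_of_lt_of_le one_pos hx₀1
  set ε : ℝ := min s (-D / x₀) with hε
  have hεs : ε ≤ s := min_le_left _ _
  have hεD : ε ≤ -D / x₀ := min_le_right _ _
  have hεpos : 0 < ε := lt_min hs (div_pos (neg_pos.mpr hD) hx₀0)
  -- the slope (φ y - φ x₀)/(y - x₀) tends to 0
  have h1 : Tendsto (fun y : ℝ => y - x₀) atTop atTop := tendsto_atTop_add_const_right _ _ tendsto_id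
  have hA : Tendsto (fun y : ℝ => φ x₀ / (y - x₀)) atTop (nhds 0) :=
    tendsto_const_nhds.div_atTop h1
  have hB : Tendsto (fun y : ℝ => x₀ / (y - x₀)) atTop (nhds 0) :=
    tendsto_const_nhds.div_atTop h1
  have hC : Tendsto (fun y : ℝ => y / (y - x₀)) atTop (nhds 1) := by
    have : Tendsto (fun y : ℝ => 1 + x₀ / (y - x₀)) atTop (nhds 1) := by
      simpa using tendsto_const_nhds.add hB
    refine this.congr' ?_
    filter_upwards [eventually_gt_atTop x₀] with y hy
    have hy0 : y - x₀ ≠ 0 := ne_of_gt (by linarith)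
    field_simp
    ring
  have hφ : Tendsto (fun y : ℝ => φ y / (y - x₀)) atTop (nhds 0) := by
    have : Tendsto (fun y : ℝ => (φ y / y) * (y / (y - x₀))) atTop (nhds (0 * 1)) :=
      hlim2.mul hC
    rw [zero_mul] at this
    refine this.congr' ?_
    filter_upwards [eventually_gt_atTop x₀, eventually_gt_atTop 0] with y hy hy0
    have h2 : y - x₀ ≠ 0 := ne_of_gt (by linarith)
    field_simp
  have hslope : Tendsto (fun y : ℝ => (φ y - φ x₀) / (y - x₀)) atTop (nhds 0) := by
    have := hφ.sub hA
    rw [sub_zero] at this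
    refine this.congr ?_
    intro y
    rw [sub_div]
  have hev : ∀ᶠ y in atTop, -ε ≤ (φ y - φ x₀) / (y - x₀) :=
    hslope.eventually (eventually_ge_nhds (by linarith : -ε < 0))
  obtain ⟨T₀, hT₀⟩ := hev.exists_forall_of_atTop
  refine ⟨max T₀ (x₀ + 1), lt_of_lt_of_le (by linarith) (le_max_right _ _), ?_⟩
  intro y hy hdiff
  have hyx₀ : x₀ < y := by
    have := le_max_right T₀ (x₀ + 1)
    linarith [le_trans this hy]
  have hy1 : (1 : ℝ) ≤ y := by linarith
  have hymem : y ∈ Set.Ici (1 : ℝ) := hy1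
  have hx₀mem : x₀ ∈ Set.Ici (1 : ℝ) := hx₀1
  -- lower bound on deriv
  have hsl : slope φ x₀ y ≤ deriv φ y :=
    hconv.slope_le_deriv hx₀mem hymem hyx₀ hdiff
  have hslval : slope φ x₀ y = (φ y - φ x₀) / (y - x₀) := slope_def_field φ x₀ y
  have hlow : -ε ≤ deriv φ y := by
    have := hT₀ y (le_trans (le_max_left _ _) hy)
    rw [hslval] at hsl
    linarith
  have hlows : -s ≤ deriv φ y := by linarith
  -- upper bound: deriv < 0
  have hup : deriv φ y < 0 := by
    have hmem' : y + 1 ∈ Set.Ici (1 : ℝ) := by simp at hymem ⊢; linarith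
    have h2 : deriv φ y ≤ slope φ y (y + 1) :=
      hconv.deriv_le_slope hymem hmem' (by linarith) hdiff
    have h3 : φ (y + 1) < φ y := hanti hymem hmem' (by linarith)
    rw [slope_def_field] at h2
    have : (φ (y + 1) - φ y) / (y + 1 - y) < 0 := by
      apply div_neg_of_neg_of_pos <;> linarith
    linarith
  refine ⟨hlows, hup, ?_⟩
  -- intercept bound
  have hdiffpos : 0 < y - x₀ := by linarith
  have h4 : φ y - φ x₀ ≤ (y - x₀) * deriv φ y := by
    rw [hslval] at hsl
    have := (div_le_iff₀ hdiffpos).mp hsl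
    linarith
  have h5 : -(x₀ * deriv φ y) ≤ x₀ * ε := by
    have := mul_le_mul_of_nonneg_left (neg_le.mp hlow) (le_of_lt hx₀0)
    -- x₀ * (-deriv) ≤ x₀ * ε
    have h6 : x₀ * -deriv φ y ≤ x₀ * ε := mul_le_mul_of_nonneg_left (by linarith) (le_of_lt hx₀0)
    linarith [h6]
  have h7 : x₀ * ε ≤ -D := by
    have := mul_le_mul_of_nonneg_left hεD (le_of_lt hx₀0)
    rw [mul_div_cancel₀] at this
    · linarith
    · exact ne_of_gt hx₀0
  nlinarith [h4, h5, h7, hx₀D]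
end
end

section
/- Suppose (ζ_1, ζ_2, ζ_3, …) is a sequence of real numbers with 0 < ζ_n < 1 for every n ∈ ℕ, such that ζ_n → 0 as n → ∞ and for every c > 0, ζ_n·e^{cn} → ∞ as n → ∞. Then there exists a function φ : ℝ → ℝ with the following properties: (a) φ(0) = 0; (b) for every positive integer n, φ(n) ≤ log ζ_n, and hence exp(φ(n)) ≤ ζ_n; (c) φ is continuous and strictly decreasing on ℝ; (d) φ is convex on ℝ; (e) lim_{x→∞} φ(x) = −∞; (f) lim_{x→∞} φ(x)/x = 0. -/
open MeasureTheory ProbabilityTheory Filter Topology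

noncomputable section

/-- Step 1 of the proof of Theorem 3.3: given `ζ_n ∈ (0,1)` with `ζ_n → 0` slower than
any exponential, there is a convex, continuous, strictly decreasing function `φ : ℝ → ℝ`
with `φ(0) = 0`, `φ(n) ≤ log ζ_n` (hence `exp(φ(n)) ≤ ζ_n`) for all `n ≥ 1`,
`φ(x) → −∞`, and `φ(x)/x → 0` as `x → ∞`. -/
theorem stmt17 (ζ : ℕ → ℝ)
    (hζ : ∀ n : ℕ, 0 < n → 0 < ζ n ∧ ζ n < 1)
    (ha : Tendsto ζ atTop (nhds 0))
    (hb : ∀ c : ℝ, 0 < c →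
      Tendsto (fun n : ℕ => ζ n * Real.exp (c * n)) atTop atTop) :
    ∃ φ : ℝ → ℝ,
      φ 0 = 0 ∧
      (∀ n : ℕ, 0 < n → φ n ≤ Real.log (ζ n) ∧ Real.exp (φ n) ≤ ζ n) ∧
      Continuous φ ∧ StrictAnti φ ∧
      ConvexOn ℝ Set.univ φ ∧
      Tendsto φ atTop atBot ∧
      Tendsto (fun x => φ x / x) atTop (nhds 0) := by
  set a : ℕ → ℝ := fun n => Real.log (ζ n) with ha_def
  set c : ℕ → ℝ := fun k => 1 / (k + 1) with hc_def
  have hc : ∀ k : ℕ, 0 < c k := fun k => by positivity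
  have hc1 : ∀ k : ℕ, c k ≤ 1 := fun k => by
    rw [hc_def]
    simp only
    rw [div_le_one (by positivity)]
    linarith [Nat.cast_nonneg (α := ℝ) k]
  -- the shifted sequences tend to infinity
  have hT : ∀ k : ℕ, Tendsto (fun n : ℕ => a (n + 1) + c k * (n + 1)) atTop atTop := by
    intro k
    have h1 : Tendsto (fun n : ℕ => Real.log (ζ n * Real.exp (c k * n))) atTop atTop :=
      Real.tendsto_log_atTop.comp (hb (c k) (hc k))
    have h2 : Tendsto (fun n : ℕ => a n + c k * n) atTop atTop := by
      refine h1.congr' ?_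
      filter_upwards [eventually_gt_atTop 0] with n hn
      rw [Real.log_mul (ne_of_gt (hζ n hn).1) (Real.exp_ne_zero _), Real.log_exp]
    refine (h2.comp (tendsto_add_atTop_nat 1)).congr (fun n => ?_)
    simp only [Function.comp_apply]
    push_cast
    ring
  have hbdd : ∀ k : ℕ, BddBelow (Set.range (fun n : ℕ => a (n + 1) + c k * (n + 1))) :=
    fun k => bddBelow_range_of_tendsto_atTop_atTop (hT k)
  set M : ℕ → ℝ := fun k => ⨅ n : ℕ, (a (n + 1) + c k * (n + 1)) with hM_def
  have hMle : ∀ k n : ℕ, M k ≤ a (n + 1) + c k * (n + 1) := fun k n => ciInf_le (hbdd k) n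
  have hMle' : ∀ k : ℕ, ∀ n : ℕ, 0 < n → M k ≤ a n + c k * n := by
    intro k n hn
    obtain ⟨m, rfl⟩ := Nat.exists_eq_succ_of_ne_zero hn.ne'
    exact_mod_cast hMle k m
  -- slope r
  have hbddr : BddBelow (Set.range (fun n : ℕ => a (n + 1) / (n + 1))) := by
    obtain ⟨m, hm⟩ := hbdd 0
    refine ⟨-(|m| + 1), ?_⟩
    rintro _ ⟨n, rfl⟩
    have hm' : m ≤ a (n + 1) + c 0 * (n + 1) := hm ⟨n, rfl⟩
    have hc0 : c 0 = 1 := by norm_num [hc_def]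
    have hpos : (0:ℝ) < (n:ℝ) + 1 := by positivity
    rw [le_div_iff₀ hpos]
    have h1 : -(|m| + 1) * ((n:ℝ) + 1) = -((|m| + 1) * ((n:ℝ)+1)) := by ring
    have h2 : (|m| + 1) * 1 ≤ (|m| + 1) * ((n:ℝ) + 1) := by
      apply mul_le_mul_of_nonneg_left (by linarith [Nat.cast_nonneg (α := ℝ) n]) (by positivity)
    have h3 : m - ((n:ℝ)+1) ≤ a (n+1) := by rw [hc0] at hm'; push_cast at hm' ⊢; linarith
    have h4 : -|m| ≤ m := neg_abs_le m
    nlinarith [abs_nonneg m, Nat.cast_nonneg (α := ℝ) n]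
  set r : ℝ := ⨅ n : ℕ, a (n + 1) / (n + 1) with hr_def
  have hrn : ∀ n : ℕ, 0 < n → r * n ≤ a n := by
    intro n hn
    obtain ⟨m, rfl⟩ := Nat.exists_eq_succ_of_ne_zero hn.ne'
    have h1 : r ≤ a (m + 1) / (m + 1) := ciInf_le hbddr m
    have hpos : (0:ℝ) < (m:ℝ) + 1 := by positivity
    rw [le_div_iff₀ hpos] at h1
    push_cast
    linarith
  have hr0 : r ≤ 0 := by
    have h1 : r ≤ a 1 / 1 := by
      have := ciInf_le hbddr 0
      simpa using this
    have h2 : a 1 < 0 := Real.log_neg (hζ 1 one_pos).1 (hζ 1 one_pos).2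
    simpa using h1.trans (by linarith)
  -- the family of affine functions and their sup
  set f : ℕ → ℝ → ℝ := fun k x => min (M k) 0 - c k * x with hf_def
  set g : ℝ → ℝ := fun x => ⨆ k : ℕ, f k x with hg_def
  have hfle : ∀ k x, f k x ≤ |x| := by
    intro k x
    have h1 : min (M k) 0 ≤ 0 := min_le_right _ _
    have h2 : -(c k * x) ≤ |c k * x| := neg_le_abs _
    have h3 : |c k * x| = c k * |x| := by rw [abs_mul, abs_of_pos (hc k)]
    have h4 : c k * |x| ≤ 1 * |x| := mul_le_mul_of_nonneg_right (hc1 k) (abs_nonneg x)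
    simp only [hf_def]
    linarith
  have hgbdd : ∀ x : ℝ, BddAbove (Set.range fun k => f k x) := by
    intro x; exact ⟨|x|, by rintro _ ⟨k, rfl⟩; exact hfle k x⟩
  have hleg : ∀ k x, f k x ≤ g x := fun k x => le_ciSup (hgbdd x) k
  have hgle : ∀ x B, (∀ k, f k x ≤ B) → g x ≤ B := fun x B h => ciSup_le h
  set φ : ℝ → ℝ := fun x => max (r * x) (g x) with hφ_def
  -- convexity
  have hconv : ConvexOn ℝ Set.univ φ := by
    refine ⟨convex_univ, ?_⟩
    intro x _ y _ p q hp hq hpq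
    simp only [smul_eq_mul]
    apply max_le
    · have h1 : r * (p * x + q * y) = p * (r * x) + q * (r * y) := by ring
      rw [h1]
      exact add_le_add (mul_le_mul_of_nonneg_left (le_max_left _ _) hp)
        (mul_le_mul_of_nonneg_left (le_max_left _ _) hq)
    · refine hgle _ _ (fun k => ?_)
      have h2 : f k (p * x + q * y) = p * f k x + q * f k y := by
        simp only [hf_def]
        linear_combination (min (M k) 0) * hpq.symm
      rw [h2]
      exact add_le_add
        (mul_le_mul_of_nonneg_left ((hleg k x).trans (le_max_right _ _)) hp)
        (mul_le_mul_of_nonneg_left ((hleg k y).trans (le_max_right _ _)) hq)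
  -- antitone
  have hanti : Antitone φ := by
    intro x y hxy
    apply max_le
    · exact le_trans (mul_le_mul_of_nonpos_left hxy hr0) (le_max_left _ _)
    · refine hgle _ _ (fun k => ?_)
      have h1 : f k y ≤ f k x := by
        simp only [hf_def]
        have := mul_le_mul_of_nonneg_left hxy (hc k).le
        linarith
      exact h1.trans ((hleg k x).trans (le_max_right _ _))
  -- tendsto atBot
  have hbot : Tendsto φ atTop atBot := by
    have hA : Tendsto a atTop atBot := by
      have h0 : Tendsto ζ atTop (𝓝[≠] (0:ℝ)) := by
        apply tendsto_nhdsWithin_of_tendsto_nhds_of_eventually_within _ ha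
        filter_upwards [eventually_gt_atTop 0] with n hn
        exact (hζ n hn).1.ne'
      exact Real.tendsto_log_nhdsNE_zero.comp h0
    have hA2 : Tendsto (fun x : ℝ => a ⌊x⌋₊) atTop atBot := hA.comp tendsto_nat_floor_atTop
    refine tendsto_atBot_mono' atTop ?_ hA2
    filter_upwards [eventually_ge_atTop (1:ℝ)] with x hx
    have hn1 : 0 < ⌊x⌋₊ := Nat.lt_of_lt_of_le Nat.zero_lt_one (Nat.le_floor (by exact_mod_cast hx))
    have hnx : (⌊x⌋₊ : ℝ) ≤ x := Nat.floor_le (by linarith)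
    apply max_le
    · calc r * x ≤ r * ⌊x⌋₊ := mul_le_mul_of_nonpos_left hnx hr0
        _ ≤ a ⌊x⌋₊ := hrn _ hn1
    · refine hgle _ _ (fun k => ?_)
      have h1 := hMle' k ⌊x⌋₊ hn1
      have h2 : c k * (⌊x⌋₊:ℝ) ≤ c k * x := mul_le_mul_of_nonneg_left hnx (hc k).le
      have h3 : min (M k) 0 ≤ M k := min_le_left _ _
      simp only [hf_def]
      linarith
  -- strict antitone
  have hstrict : StrictAnti φ := by
    intro x y hxy
    rcases lt_or_eq_of_le (hanti hxy.le) with h | h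
    · exact h
    · exfalso
      have key : ∀ z, y < z → φ y ≤ φ z := by
        intro z hz
        have hzx0 : (0:ℝ) < z - x := by linarith
        set p := (z - y)/(z - x) with hp_def
        set q := (y - x)/(z - x) with hq_def
        have hp : 0 ≤ p := div_nonneg (by linarith) hzx0.le
        have hq0 : 0 < q := div_pos (by linarith) hzx0
        have hpq : p + q = 1 := by
          rw [hp_def, hq_def]
          field_simp
          ring
        have hcomb : p * x + q * z = y := by
          rw [hp_def, hq_def]
          field_simp
          ring
        have hcv := hconv.2 (Set.mem_univ x) (Set.mem_univ z) hp hq0.le hpq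
        simp only [smul_eq_mul] at hcv
        rw [hcomb] at hcv
        rw [← h] at hcv
        have hp1 : p = 1 - q := by linarith
        rw [hp1] at hcv
        have h6 : q * φ y ≤ q * φ z := by nlinarith [hcv]
        exact le_of_mul_le_mul_left h6 hq0
      obtain ⟨z, hz1, hz2⟩ := ((hbot.eventually (eventually_le_atBot (φ y - 1))).and
        (eventually_gt_atTop y)).exists
      linarith [key z hz2]
  refine ⟨φ, ?_, ?_, ?_, hstrict, hconv, hbot, ?_⟩
  · -- φ 0 = 0
    show max (r * 0) (g 0) = 0
    rw [mul_zero]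
    refine max_eq_left (hgle 0 0 (fun k => ?_))
    simp only [hf_def, mul_zero, sub_zero]
    exact min_le_right _ _
  · -- bounds at integers
    intro n hn
    have h1 : φ n ≤ a n := by
      apply max_le
      · exact hrn n hn
      · refine hgle _ _ (fun k => ?_)
        have h2 := hMle' k n hn
        have h3 : min (M k) 0 ≤ M k := min_le_left _ _
        simp only [hf_def]
        linarith
    refine ⟨h1, ?_⟩
    calc Real.exp (φ n) ≤ Real.exp (a n) := Real.exp_le_exp.2 h1
      _ = ζ n := Real.exp_log (hζ n hn).1
  · -- continuity
    rw [← continuousOn_univ]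
    exact ConvexOn.continuousOn isOpen_univ hconv
  · -- φ x / x → 0
    rw [Metric.tendsto_atTop]
    intro ε hε
    obtain ⟨k, hk⟩ := exists_nat_one_div_lt (half_pos hε)
    set m : ℝ := min (M k) 0 with hm_def
    refine ⟨max 1 (2*(|m|+1)/ε), fun x hx => ?_⟩
    have hx1 : (1:ℝ) ≤ x := le_trans (le_max_left _ _) hx
    have hx0 : (0:ℝ) < x := by linarith
    have hx2 : 2*(|m|+1)/ε ≤ x := le_trans (le_max_right _ _) hx
    have hφ0 : φ x ≤ 0 := by
      apply max_le
      · exact mul_nonpos_of_nonpos_of_nonneg hr0 hx0.le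
      · refine hgle _ _ (fun k' => ?_)
        have h1 : min (M k') 0 ≤ 0 := min_le_right _ _
        have h2 := mul_nonneg (hc k').le hx0.le
        simp only [hf_def]
        linarith
    have hlow : m - c k * x ≤ φ x := (hleg k x).trans (le_max_right _ _)
    have hm0 : m ≤ 0 := min_le_right _ _
    have hmx : -(ε/2) < m / x := by
      rw [lt_div_iff₀ hx0]
      have habs : |m| = -m := abs_of_nonpos hm0
      have h4 : 2*(|m|+1) ≤ x * ε := (div_le_iff₀ hε).mp hx2
      nlinarith [abs_nonneg m]
    have hck : c k < ε/2 := hk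
    rw [Real.dist_eq, sub_zero, abs_lt]
    constructor
    · have h1 : (m - c k * x)/x ≤ φ x / x := (div_le_div_iff_of_pos_right hx0).mpr hlow
      have h2 : (m - c k * x)/x = m/x - c k := by field_simp
      calc -ε = -(ε/2) + -(ε/2) := by ring
        _ < m/x - c k := by linarith
        _ ≤ φ x / x := h2 ▸ h1
    · have h5 : φ x / x ≤ 0 := div_nonpos_of_nonpos_of_nonneg hφ0 hx0.le
      linarith
end
end

section
/- Suppose X = (X_k, k ∈ ℤ) is a strictly stationary sequence of real random variables satisfying the complete dissipation property: for every b > 0, sup_{r ∈ ℝ} P( r − b < n^{-1/2}(X_1 + ⋯ + X_n) < r + b ) → 0 as n → ∞. Suppose μ is a non-degenerate probability measure on ℝ (i.e., not a point mass), G is an infinite subset of ℕ, (a_n, n ∈ G) are real numbers, and (b_n, n ∈ G) are positive numbers, such that [(X_1 + X_2 + ⋯ + X_n) − a_n]/b_n converges in distribution to μ as n → ∞ along n ∈ G. Then b_n/n^{1/2} → ∞ as n → ∞ along n ∈ G. -/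
open MeasureTheory ProbabilityTheory Filter Topology

noncomputable section

/-- A sequence `X = (X_k, k ∈ ℤ)` of real random variables is strictly stationary if for
every `n ≥ 1` and `j ∈ ℤ`, `(X_1, …, X_n)` has the same distribution as
`(X_{1+j}, …, X_{n+j})`. -/
def IsStrictlyStationary {Ω : Type*} [MeasurableSpace Ω] (P : Measure Ω)
    (X : ℤ → Ω → ℝ) : Prop :=
  ∀ (n : ℕ) (j : ℤ),
    Measure.map (fun ω => fun i : Fin n => X (1 + (i : ℤ)) ω) P =
    Measure.map (fun ω => fun i : Fin n => X (1 + j + (i : ℤ)) ω) P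

/-- Claim 13 of the Appendix: if a strictly stationary sequence satisfies the complete
dissipation property and `[(X_1 + ⋯ + X_n) − a_n]/b_n → μ` in distribution along an
infinite set `G ⊆ ℕ`, with `μ` non-degenerate, then `b_n/√n → ∞` along `G`. -/
theorem stmt18 {Ω : Type*} [MeasurableSpace Ω] (P : Measure Ω) [IsProbabilityMeasure P]
    (X : ℤ → Ω → ℝ) (hmeas : ∀ k, Measurable (X k))
    (hstat : IsStrictlyStationary P X)
    (hdiss : ∀ b : ℝ, 0 < b →
      Tendsto (fun n : ℕ => ⨆ r : ℝ,
        (P {ω | r - b < (Real.sqrt n)⁻¹ * ∑ k ∈ Finset.Icc (1 : ℤ) (n : ℤ), X k ω ∧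
                (Real.sqrt n)⁻¹ * ∑ k ∈ Finset.Icc (1 : ℤ) (n : ℤ), X k ω < r + b}).toReal)
        atTop (nhds 0))
    (μ : Measure ℝ) [IsProbabilityMeasure μ]
    (hnondeg : ∀ x : ℝ, μ ≠ Measure.dirac x)
    (G : Set ℕ) (hG : G.Infinite)
    (a b : ℕ → ℝ) (hb : ∀ n ∈ G, 0 < b n)
    (hconv : ∀ f : BoundedContinuousFunction ℝ ℝ,
      Tendsto (fun n : ℕ =>
          ∫ ω, f (((∑ k ∈ Finset.Icc (1 : ℤ) (n : ℤ), X k ω) - a n) / b n) ∂P)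
        (atTop ⊓ Filter.principal G) (nhds (∫ x, f x ∂μ))) :
    Tendsto (fun n : ℕ => b n / Real.sqrt n) (atTop ⊓ Filter.principal G) atTop := by
  by_contra hcon
  have hcon' : ∃ M : ℝ, ∃ᶠ n in atTop ⊓ Filter.principal G, b n / Real.sqrt n < M := by
    rw [tendsto_atTop] at hcon; push_neg at hcon
    simpa [Filter.not_eventually, not_le] using hcon
  obtain ⟨M₀, hM₀⟩ := hcon'
  set M : ℝ := max M₀ 1 with hMdef
  have hMpos : (0:ℝ) < M := lt_of_lt_of_le one_pos (le_max_right _ _)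
  have hfreq : ∃ᶠ n in atTop ⊓ Filter.principal G, n ∈ {m | b m / Real.sqrt m < M} :=
    hM₀.mono fun n hn => lt_of_lt_of_le hn (le_max_left _ _)
  set L' : Filter ℕ := (atTop ⊓ Filter.principal G) ⊓
      Filter.principal {m | b m / Real.sqrt m < M} with hL'def
  have hne : L'.NeBot := Filter.frequently_mem_iff_neBot.1 hfreq
  -- choose N with μ (Icc (-N) N) ≠ 0
  have hN : ∃ N : ℕ, μ (Set.Icc (-(N:ℝ)) (N:ℝ)) ≠ 0 := by
    by_contra h
    push_neg at h
    have hcover : (Set.univ : Set ℝ) ⊆ ⋃ n : ℕ, Set.Icc (-(n:ℝ)) (n:ℝ) := by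
      intro x _
      refine Set.mem_iUnion.2 ⟨⌈|x|⌉₊, ?_⟩
      have h1 : |x| ≤ (⌈|x|⌉₊ : ℝ) := Nat.le_ceil _
      have := abs_le.1 h1
      exact ⟨this.1, this.2⟩
    have h0 : μ Set.univ = 0 :=
      le_antisymm ((measure_mono hcover).trans (le_of_eq (measure_iUnion_null h))) zero_le
    simp [measure_univ] at h0
  obtain ⟨N, hNpos⟩ := hN
  set K : Set ℝ := Set.Icc (-(N:ℝ)) (N:ℝ) with hKdef
  have hKne : K.Nonempty := ⟨0, by constructor <;> simp⟩
  -- the bump function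
  set g : ℝ → ℝ := fun x => max (1 - Metric.infDist x K) 0 with hgdef
  have hgcont : Continuous g :=
    (continuous_const.sub (Metric.continuous_infDist_pt K)).max continuous_const
  have hg0 : ∀ x, 0 ≤ g x := fun x => le_max_right _ _
  have hg1 : ∀ x, g x ≤ 1 := fun x =>
    max_le (by have := Metric.infDist_nonneg (x := x) (s := K); linarith) one_pos.le
  have hgK : ∀ x ∈ K, g x = 1 := fun x hx => by
    simp [hgdef, Metric.infDist_zero_of_mem hx]
  have hgout : ∀ x : ℝ, (N:ℝ) + 1 ≤ |x| → g x = 0 := by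
    intro x hx
    obtain ⟨y, hyK, hyd⟩ :=
      (isCompact_Icc (a := -(N:ℝ)) (b := (N:ℝ))).exists_infDist_eq_dist hKne x
    have hy : |y| ≤ (N:ℝ) := abs_le.2 ⟨hyK.1, hyK.2⟩
    have hd : (1:ℝ) ≤ dist x y := by
      rw [Real.dist_eq]
      have h2 : |x| - |y| ≤ |x - y| := abs_sub_abs_le_abs_sub x y
      linarith
    have : (1:ℝ) ≤ Metric.infDist x K := by rw [hyd]; exact hd
    simp only [hgdef]
    exact max_eq_right (by linarith)
  set f : BoundedContinuousFunction ℝ ℝ :=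
    BoundedContinuousFunction.mkOfBound ⟨g, hgcont⟩ 1 (fun x y => by
      simp only [ContinuousMap.coe_mk]
      rw [Real.dist_eq, abs_le]
      have h1 := hg0 x
      have h2 := hg0 y
      have h3 := hg1 x
      have h4 := hg1 y
      constructor <;> linarith)
    with hfdef
  have hfcoe : ∀ x, f x = g x := fun x => rfl
  -- lower bound for ∫ f dμ
  have hKmeas : MeasurableSet K := measurableSet_Icc
  have hintμ : (μ K).toReal ≤ ∫ x, f x ∂μ := by
    have h1 : ∫ x, K.indicator (fun _ => (1:ℝ)) x ∂μ = (μ K).toReal := by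
      rw [integral_indicator hKmeas]
      simp [Measure.real]
    rw [← h1]
    refine integral_mono_of_nonneg (Filter.Eventually.of_forall ?_) (f.integrable μ)
      (Filter.Eventually.of_forall ?_)
    · intro x
      by_cases hx : x ∈ K <;> simp [Set.indicator, hx]
    · intro x
      by_cases hx : x ∈ K
      · simp only [Set.indicator_of_mem hx]
        rw [hfcoe, hgK x hx]
      · simp only [Set.indicator_of_notMem hx]
        rw [hfcoe]; exact hg0 x
  have hcpos : 0 < ∫ x, f x ∂μ :=
    lt_of_lt_of_le (ENNReal.toReal_pos hNpos (measure_ne_top μ K)) hintμ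
  -- the dominating sequence
  set B : ℝ := ((N:ℝ) + 1) * M with hBdef
  have hBpos : 0 < B := by positivity
  set s : ℕ → ℝ := fun n => ⨆ r : ℝ,
        (P {ω | r - B < (Real.sqrt n)⁻¹ * ∑ k ∈ Finset.Icc (1 : ℤ) (n : ℤ), X k ω ∧
                (Real.sqrt n)⁻¹ * ∑ k ∈ Finset.Icc (1 : ℤ) (n : ℤ), X k ω < r + B}).toReal
    with hsdef
  have hL'le : L' ≤ atTop := le_trans inf_le_left inf_le_left
  have hstend : Tendsto s L' (nhds 0) := (hdiss B hBpos).mono_left hL'le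
  have hftend : Tendsto (fun n : ℕ =>
      ∫ ω, f (((∑ k ∈ Finset.Icc (1 : ℤ) (n : ℤ), X k ω) - a n) / b n) ∂P) L'
      (nhds (∫ x, f x ∂μ)) := (hconv f).mono_left inf_le_left
  -- eventual bound
  have hev : ∀ᶠ (n : ℕ) in L',
      (∫ ω, f (((∑ k ∈ Finset.Icc (1 : ℤ) (n : ℤ), X k ω) - a n) / b n) ∂P) ≤ s n := by
    have hle1 : L' ≤ Filter.principal G := le_trans inf_le_left inf_le_right
    have hG' : ∀ᶠ (n : ℕ) in L', n ∈ G := hle1 (Filter.mem_principal_self G)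
    have hM' : ∀ᶠ (n : ℕ) in L', b n / Real.sqrt n < M :=
      (inf_le_right : L' ≤ _) (Filter.mem_principal_self _)
    filter_upwards [hG', hM'] with n hnG hnM
    set S : Ω → ℝ := fun ω => ∑ k ∈ Finset.Icc (1 : ℤ) (n : ℤ), X k ω with hSdef
    have hSmeas : Measurable S := Finset.measurable_sum _ (fun k _ => hmeas k)
    set r : ℝ := (Real.sqrt n)⁻¹ * a n with hrdef
    set A : Set Ω := {ω | r - B < (Real.sqrt n)⁻¹ * S ω ∧ (Real.sqrt n)⁻¹ * S ω < r + B}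
      with hAdef
    have hAeq : A = (fun ω => (Real.sqrt n)⁻¹ * S ω) ⁻¹' Set.Ioo (r - B) (r + B) := by
      ext ω; simp [hAdef, Set.mem_Ioo]
    have hAmeas : MeasurableSet A := by
      rw [hAeq]
      exact (measurable_const.mul hSmeas) measurableSet_Ioo
    have hbn : 0 < b n := hb n hnG
    have hsq : 0 ≤ (Real.sqrt n)⁻¹ := inv_nonneg.2 (Real.sqrt_nonneg _)
    have hmul : b n * (Real.sqrt n)⁻¹ < M := by rwa [div_eq_mul_inv] at hnM
    -- pointwise bound
    have hpt : ∀ ω, f ((S ω - a n) / b n) ≤ A.indicator (fun _ => (1:ℝ)) ω := by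
      intro ω
      by_cases hA : ω ∈ A
      · rw [Set.indicator_of_mem hA]
        exact hg1 _
      · rw [Set.indicator_of_notMem hA, hfcoe]
        refine le_of_eq (hgout _ ?_)
        by_contra habs
        push_neg at habs
        apply hA
        have hlt : |S ω - a n| < ((N:ℝ) + 1) * b n := by
          rw [abs_div] at habs
          rw [abs_of_pos hbn] at habs
          calc |S ω - a n| = |S ω - a n| / b n * b n := by field_simp
            _ < ((N:ℝ) + 1) * b n := by
                apply mul_lt_mul_of_pos_right habs hbn
        have key : |(Real.sqrt n)⁻¹ * S ω - r| < B := by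
          have h2 : (Real.sqrt n)⁻¹ * S ω - r = (Real.sqrt n)⁻¹ * (S ω - a n) := by
            rw [hrdef]; ring
          rw [h2, abs_mul, abs_of_nonneg hsq]
          have h3 : (Real.sqrt n)⁻¹ * |S ω - a n| ≤
              (Real.sqrt n)⁻¹ * (((N:ℝ) + 1) * b n) := by
            apply mul_le_mul_of_nonneg_left hlt.le hsq
          have h4 : (Real.sqrt n)⁻¹ * (((N:ℝ) + 1) * b n)
              = ((N:ℝ) + 1) * (b n * (Real.sqrt n)⁻¹) := by ring
          have hNpos' : (0:ℝ) < (N:ℝ) + 1 := by positivity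
          nlinarith [abs_nonneg (S ω - a n)]
        have := abs_lt.1 key
        exact ⟨by linarith, by linarith⟩
    -- integral bound
    have hint : (∫ ω, f ((S ω - a n) / b n) ∂P) ≤ (P A).toReal := by
      have h1 : ∫ ω, A.indicator (fun _ => (1:ℝ)) ω ∂P = (P A).toReal := by
        rw [integral_indicator hAmeas]; simp [Measure.real]
      rw [← h1]
      refine integral_mono_of_nonneg (Filter.Eventually.of_forall (fun ω => ?_))
        ((integrable_const (1:ℝ)).indicator hAmeas) (Filter.Eventually.of_forall hpt)
      exact hg0 _
    refine le_trans hint ?_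
    -- bound by the sup
    have hbdd : BddAbove (Set.range (fun r : ℝ =>
        (P {ω | r - B < (Real.sqrt n)⁻¹ * ∑ k ∈ Finset.Icc (1 : ℤ) (n : ℤ), X k ω ∧
                (Real.sqrt n)⁻¹ * ∑ k ∈ Finset.Icc (1 : ℤ) (n : ℤ), X k ω < r + B}).toReal)) := by
      refine ⟨1, ?_⟩
      rintro x ⟨r', rfl⟩
      exact ENNReal.toReal_le_of_le_ofReal zero_le_one (by simpa using prob_le_one)
    exact le_ciSup hbdd r
  have hle : (∫ x, f x ∂μ) ≤ 0 := le_of_tendsto_of_tendsto hftend hstend hev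
  linarith
end
end
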